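/- Let P be symmetric positive definite, F monotone, and z_* a point with 0 ∈ F(z_*). If P(z_i - z_{i+1}) ∈ F(z_{i+1}) for each i, then for every i: ‖z_i - z_*‖²_P ≥ ‖z_{i+1} - z_*‖²_P + ‖P(z_i - z_{i+1})‖²_{P^{-1}}. In particular, dist²_{P^{-1}}(0, F(z_{i+1})) ≤ ‖z_i - z_*‖²_P - ‖z_{i+1} - z_*‖²_P. -/

import Mathlib

open Matrix

/-- Quadratic form `⟨v, G v⟩`. -/
def qf {ι : Type*} [Fintype ι] (G : Matrix ι ι ℝ) (v : ι → ℝ) : ℝ := v ⬝ᵥ G.mulVec v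

/-- Squared distance (in the quadratic form of `G`) from `0` to a set `S`. -/
noncomputable def distSqTo {ι : Type*} [Fintype ι] (G : Matrix ι ι ℝ)
    (S : Set (ι → ℝ)) : ℝ := sInf (qf G '' S)

theorem stmt5 {d : ℕ} (P : Matrix (Fin d) (Fin d) ℝ) (hP : P.PosDef)
    (F : (Fin d → ℝ) → Set (Fin d → ℝ))
    (hmono : ∀ z z' u v, u ∈ F z → v ∈ F z' → 0 ≤ (u - v) ⬝ᵥ (z - z'))
    (zstar : Fin d → ℝ) (hzstar : (0 : Fin d → ℝ) ∈ F zstar)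
    (zi zi1 : Fin d → ℝ) (hstep : P.mulVec (zi - zi1) ∈ F zi1) :
    qf P (zi1 - zstar) + qf P⁻¹ (P.mulVec (zi - zi1)) ≤ qf P (zi - zstar) ∧
    distSqTo P⁻¹ (F zi1) ≤ qf P (zi - zstar) - qf P (zi1 - zstar) := by
  set w := zi - zi1 with hw
  set b := zi1 - zstar with hb
  have hPsymm : Pᵀ = P := hP.1
  have hinv : P⁻¹.mulVec (P.mulVec w) = w := by
    rw [Matrix.mulVec_mulVec, Matrix.nonsing_inv_mul P (isUnit_iff_ne_zero.mpr hP.det_pos.ne'),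
      Matrix.one_mulVec]
  have hdot : ∀ x y : Fin d → ℝ, x ⬝ᵥ P.mulVec y = P.mulVec x ⬝ᵥ y := by
    intro x y
    rw [Matrix.dotProduct_mulVec, ← Matrix.mulVec_transpose, hPsymm]
  have hqfinv : qf P⁻¹ (P.mulVec w) = w ⬝ᵥ P.mulVec w := by
    rw [qf, hinv, hdot]
  have hcross : (0:ℝ) ≤ P.mulVec w ⬝ᵥ b := by
    have h := hmono zi1 zstar (P.mulVec w) 0 hstep hzstar
    rw [sub_zero] at h
    exact h
  have hswap : w ⬝ᵥ P.mulVec b = P.mulVec w ⬝ᵥ b := hdot w b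
  have hkey : qf P (zi - zstar) = qf P b + qf P⁻¹ (P.mulVec w) + 2 * (P.mulVec w ⬝ᵥ b) := by
    have hab : zi - zstar = b + w := by rw [hb, hw]; ring_nf
    rw [hab, hqfinv, qf, qf, Matrix.mulVec_add, dotProduct_add,
      add_dotProduct, add_dotProduct]
    have h1 : b ⬝ᵥ P.mulVec w = P.mulVec w ⬝ᵥ b := dotProduct_comm _ _
    linarith [hswap, h1]
  have hfirst : qf P b + qf P⁻¹ (P.mulVec w) ≤ qf P (zi - zstar) := by
    rw [hkey]; linarith
  refine ⟨hfirst, ?_⟩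
  have hnonneg : ∀ x ∈ qf P⁻¹ '' F zi1, (0:ℝ) ≤ x := by
    rintro x ⟨v, -, rfl⟩
    rcases eq_or_ne v 0 with rfl | hv
    · simp [qf]
    · exact le_of_lt (hP.inv.dotProduct_mulVec_pos hv)
  have hle : distSqTo P⁻¹ (F zi1) ≤ qf P⁻¹ (P.mulVec w) := by
    apply csInf_le ⟨0, fun x hx => hnonneg x hx⟩
    exact ⟨_, hstep, rfl⟩
  linarith
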